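/- Let d ≥ 1 and let μ, ν be probability measures on ℝ^d with finite second moment such that μ ≤_cx ν. Let π ∈ Π(μ,ν) be optimal for W₂(μ,ν) and concentrated on the graph of a measurable map T : ℝ^d → ℝ^d (i.e. π is the image of μ by x ↦ (x, T(x))). Then for every martingale coupling M ∈ Π^M(μ,ν), AW₂²(M, π) = W₂²(μ,ν) + ∫_{ℝ^d} |y|² ν(dy) − ∫_{ℝ^d} |x|² μ(dx); in particular every M ∈ Π^M(μ,ν) is an AW₂-minimal martingale rearrangement coupling of π. -/

import Mathlib

open MeasureTheory ProbabilityTheory Set Filter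

noncomputable section

/-- Lebesgue measure restricted to `(0,1)`. -/
def lam01 : Measure ℝ := volume.restrict (Set.Ioo 0 1)

/-- Cumulative distribution function `F_η(x) = η((-∞, x])`. -/
def Fcdf (η : Measure ℝ) (x : ℝ) : ℝ := (η (Set.Iic x)).toReal

/-- Left limit of the cumulative distribution function, `F_η(x-) = η((-∞, x))`. -/
def FcdfL (η : Measure ℝ) (x : ℝ) : ℝ := (η (Set.Iio x)).toReal

/-- Quantile function `F_η^{-1}(u) = inf {x : F_η(x) ≥ u}`. -/
def qf (η : Measure ℝ) (u : ℝ) : ℝ := sInf {x | u ≤ Fcdf η x}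

/-- `π` is a coupling between `μ` and `ν`. -/
def IsCoupling (π : Measure (ℝ × ℝ)) (μ ν : Measure ℝ) : Prop :=
  π.map Prod.fst = μ ∧ π.map Prod.snd = ν

/-- `W_ρ^ρ(η, η')`, the Wasserstein distance of order `ρ` raised to the power `ρ`. -/
def Wr (ρ : ℝ) (η η' : Measure ℝ) : ℝ :=
  sInf {c | ∃ π : Measure (ℝ × ℝ), IsCoupling π η η' ∧ c = ∫ p, |p.1 - p.2| ^ ρ ∂π}

/-- The Wasserstein distance of order `ρ`. -/
def W (ρ : ℝ) (η η' : Measure ℝ) : ℝ := Wr ρ η η' ^ (1 / ρ)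

/-- The stochastic order `η ≤_st η'`: the quantile functions are ordered on `(0,1)`. -/
def StochOrder (η η' : Measure ℝ) : Prop := ∀ u ∈ Set.Ioo (0 : ℝ) 1, qf η u ≤ qf η' u

/-- The convex order `μ ≤_cx ν`: `∫ f dμ ≤ ∫ f dν` for every (integrable) convex `f`. -/
def ConvexOrder (μ ν : Measure ℝ) : Prop :=
  ∀ f : ℝ → ℝ, ConvexOn ℝ Set.univ f → Integrable f μ → Integrable f ν →
    ∫ x, f x ∂μ ≤ ∫ x, f x ∂ν

/-- `AW_ρ^ρ(π, π')`, the adapted Wasserstein distance of order `ρ` raised to the power `ρ`: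
the infimum over couplings `χ` between the first marginals of
`∫ (|x-x'|^ρ + W_ρ^ρ(π_x, π'_{x'})) dχ`, where `κ, κ'` are disintegration kernels of `π, π'`. -/
def AWr (ρ : ℝ) (π π' : Measure (ℝ × ℝ)) : ℝ :=
  sInf {c | ∃ (χ : Measure (ℝ × ℝ)) (κ κ' : Kernel ℝ ℝ),
      IsCoupling χ (π.map Prod.fst) (π'.map Prod.fst) ∧
      π = (π.map Prod.fst).compProd κ ∧ π' = (π'.map Prod.fst).compProd κ' ∧
      c = ∫ q, (|q.1 - q.2| ^ ρ + Wr ρ (κ q.1) (κ' q.2)) ∂χ}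

/-- The adapted Wasserstein distance of order `ρ`. -/
def AW (ρ : ℝ) (π π' : Measure (ℝ × ℝ)) : ℝ := AWr ρ π π' ^ (1 / ρ)

/-- The lifted adapted Wasserstein distance of order `ρ`, raised to the power `ρ`, between the
lifted couplings with first marginals `μ, μ'` and kernels `p, p'`. -/
def lAWr (ρ : ℝ) (μ : Measure ℝ) (p : ℝ → Measure ℝ) (μ' : Measure ℝ)
    (p' : ℝ → Measure ℝ) : ℝ :=
  sInf {c | ∃ χ : Measure (ℝ × ℝ), IsCoupling χ lam01 lam01 ∧
      c = ∫ q, (|q.1 - q.2| ^ ρ + |qf μ q.1 - qf μ' q.2| ^ ρ + Wr ρ (p q.1) (p' q.2)) ∂χ}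

/-- The probability kernel `p` encodes a lifted coupling
`λ_{(0,1)}(du) δ_{F_μ^{-1}(u)}(dx) p_u(dy)` between `μ` and `ν`. -/
def IsLiftedCoupling (μ ν : Measure ℝ) (p : ℝ → Measure ℝ) : Prop :=
  Measurable p ∧ (∀ u, IsProbabilityMeasure (p u)) ∧ lam01.bind p = ν

/-- The probability kernel `m` encodes a lifted martingale coupling between `μ` and `ν`. -/
def IsLiftedMartingale (μ ν : Measure ℝ) (m : ℝ → Measure ℝ) : Prop :=
  IsLiftedCoupling μ ν m ∧ ∀ᵐ u ∂lam01, (∫ y, y ∂(m u)) = qf μ u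

end

noncomputable section

variable (d : ℕ)

/-- `π` is a coupling between measures `μ` and `ν` on `ℝ^d`. -/
def IsCouplingE (π : Measure (EuclideanSpace ℝ (Fin d) × EuclideanSpace ℝ (Fin d)))
    (μ ν : Measure (EuclideanSpace ℝ (Fin d))) : Prop :=
  π.map Prod.fst = μ ∧ π.map Prod.snd = ν

/-- `W_ρ^ρ` on `ℝ^d` with the Euclidean norm. -/
def WrE (ρ : ℝ) (η η' : Measure (EuclideanSpace ℝ (Fin d))) : ℝ :=
  sInf {c | ∃ π, IsCouplingE d π η η' ∧ c = ∫ p, ‖p.1 - p.2‖ ^ ρ ∂π}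

/-- The convex order on measures on `ℝ^d`. -/
def ConvexOrderE (μ ν : Measure (EuclideanSpace ℝ (Fin d))) : Prop :=
  ∀ f : EuclideanSpace ℝ (Fin d) → ℝ, ConvexOn ℝ Set.univ f →
    Integrable f μ → Integrable f ν → ∫ x, f x ∂μ ≤ ∫ x, f x ∂ν

/-- `AW_ρ^ρ` on couplings of measures on `ℝ^d`. -/
def AWrE (ρ : ℝ)
    (π π' : Measure (EuclideanSpace ℝ (Fin d) × EuclideanSpace ℝ (Fin d))) : ℝ :=
  sInf {c | ∃ (χ : Measure (EuclideanSpace ℝ (Fin d) × EuclideanSpace ℝ (Fin d)))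
      (κ κ' : Kernel (EuclideanSpace ℝ (Fin d)) (EuclideanSpace ℝ (Fin d))),
      IsCouplingE d χ (π.map Prod.fst) (π'.map Prod.fst) ∧
      π = (π.map Prod.fst).compProd κ ∧ π' = (π'.map Prod.fst).compProd κ' ∧
      c = ∫ q, (‖q.1 - q.2‖ ^ ρ + WrE d ρ (κ q.1) (κ' q.2)) ∂χ}

end


noncomputable section Aux

lemma rpow_two' (t : ℝ) : t ^ (2:ℝ) = t ^ (2:ℕ) := by
  rw [show (2:ℝ) = ((2:ℕ):ℝ) by norm_num, Real.rpow_natCast]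

variable {α Ω : Type*} [MeasurableSpace α] [MeasurableSpace Ω]
  [StandardBorelSpace Ω] [Nonempty Ω]

lemma kernel_ae_eq {μ : Measure α} [IsFiniteMeasure μ] (κ η : Kernel α Ω)
    [IsSFiniteKernel κ] [IsMarkovKernel η] (h : μ.compProd κ = μ.compProd η) :
    ∀ᵐ x ∂μ, κ x = η x := by
  have hfst : (μ ⊗ₘ η).fst = μ := Measure.fst_compProd μ η
  have hκρ : (μ ⊗ₘ η) = (μ ⊗ₘ η).fst ⊗ₘ κ := by rw [hfst]; exact h.symm
  have hηρ : (μ ⊗ₘ η) = (μ ⊗ₘ η).fst ⊗ₘ η := by rw [hfst]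
  have h1 := eq_condKernel_of_measure_eq_compProd' κ hκρ MeasurableSet.univ
  have h2 := eq_condKernel_of_measure_eq_compProd η hηρ
  rw [hfst] at h1 h2
  have hAmeas : MeasurableSet {x | κ x Set.univ ≤ 1} :=
    measurableSet_le (Kernel.measurable_coe κ MeasurableSet.univ) measurable_const
  set κ₂ := Kernel.piecewise hAmeas κ η with hκ₂
  haveI : IsFiniteKernel κ₂ := ⟨⟨1, ENNReal.one_lt_top, fun a => by
    rw [Kernel.piecewise_apply]; split_ifs with ha
    · exact ha
    · simp⟩⟩
  have hae : ∀ᵐ x ∂μ, κ x = κ₂ x := by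
    filter_upwards [h1, h2] with x hx1 hx2
    have hxA : x ∈ {x | κ x Set.univ ≤ 1} := by
      simp only [Set.mem_setOf_eq, hx1, ← hx2]
      simp
    rw [hκ₂, Kernel.piecewise_apply, if_pos hxA]
  have hcomp : (μ ⊗ₘ η) = (μ ⊗ₘ η).fst ⊗ₘ κ₂ := by
    rw [hfst, ← h, Measure.compProd_congr hae]
  have h3 := eq_condKernel_of_measure_eq_compProd κ₂ hcomp
  rw [hfst] at h3
  filter_upwards [hae, h2, h3] with x hx1 hx2 hx3
  rw [hx1, hx3, ← hx2]

lemma compProd_det {μ : Measure α} [SFinite μ] {β : Type*} [MeasurableSpace β] {T : α → β}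
    (hT : Measurable T) :
    μ.compProd (Kernel.deterministic T hT) = μ.map (fun x => (x, T x)) := by
  have hm : Measurable fun x => (x, T x) := measurable_id.prodMk hT
  ext s hs
  rw [Measure.compProd_apply hs, Measure.map_apply hm hs]
  have heq : ∀ a, Kernel.deterministic T hT a (Prod.mk a ⁻¹' s)
      = Set.indicator ((fun x => (x, T x)) ⁻¹' s) 1 a := by
    intro a
    rw [Kernel.deterministic_apply, Measure.dirac_apply' _ (measurable_prodMk_left hs)]
    by_cases ha : (a, T a) ∈ s <;> simp [Set.indicator_apply, Set.mem_preimage, ha]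
  simp_rw [heq]
  rw [lintegral_indicator (hm hs)]
  simp

end Aux

noncomputable section Main

variable {d : ℕ}

local notation "E" => EuclideanSpace ℝ (Fin d)

lemma WrE_dirac (η : Measure E) [IsProbabilityMeasure η] (a : E) :
    WrE d 2 η (Measure.dirac a) = ∫ y, ‖y - a‖ ^ 2 ∂η := by
  have hval : ∀ c ∈ {c | ∃ π, IsCouplingE d π η (Measure.dirac a) ∧
      c = ∫ p, ‖p.1 - p.2‖ ^ (2:ℝ) ∂π}, c = ∫ y, ‖y - a‖ ^ 2 ∂η := by
    rintro c ⟨π', ⟨hc1, hc2⟩, rfl⟩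
    have hsnd : ∀ᵐ p : E × E ∂π', p.2 = a := by
      rw [ae_iff]
      have hset : {p : E × E | ¬ p.2 = a} = Prod.snd ⁻¹' {a}ᶜ := rfl
      rw [hset, ← Measure.map_apply measurable_snd (measurableSet_singleton a).compl, hc2]
      simp
    calc ∫ p, ‖p.1 - p.2‖ ^ (2:ℝ) ∂π' = ∫ p : E × E, ‖p.1 - a‖ ^ 2 ∂π' := by
          refine integral_congr_ae ?_
          filter_upwards [hsnd] with p hp
          rw [hp, rpow_two']
      _ = ∫ y, ‖y - a‖ ^ 2 ∂η := by
          rw [← hc1, integral_map (f := fun y : E => ‖y - a‖ ^ 2) measurable_fst.aemeasurable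
            (Measurable.aestronglyMeasurable (by fun_prop))]
  have hga : Measurable fun y : E => (y, a) :=
    measurable_id.prodMk measurable_const
  have hmem : (∫ y, ‖y - a‖ ^ 2 ∂η) ∈ {c | ∃ π, IsCouplingE d π η (Measure.dirac a) ∧
      c = ∫ p, ‖p.1 - p.2‖ ^ (2:ℝ) ∂π} := by
    refine ⟨η.map (fun y => (y, a)), ⟨?_, ?_⟩, ?_⟩
    · have h : Prod.fst ∘ (fun y : E => (y, a)) = id := rfl
      rw [Measure.map_map measurable_fst hga, h, Measure.map_id]
    · have h : Prod.snd ∘ (fun y : E => (y, a)) = fun _ => a := rfl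
      rw [Measure.map_map measurable_snd hga, h, Measure.map_const]
      simp
    · rw [integral_map (f := fun p : E × E => ‖p.1 - p.2‖ ^ (2:ℝ)) hga.aemeasurable
        (Measurable.aestronglyMeasurable (by fun_prop))]
      simp_rw [rpow_two']
  refine le_antisymm (csInf_le ⟨_, fun c hc => (hval c hc).symm.le⟩ hmem)
    (le_csInf ⟨_, hmem⟩ fun c hc => (hval c hc).symm.le)

lemma dirac_cost (η : Measure E) [IsProbabilityMeasure η]
    (h2 : Integrable (fun y : E => ‖y‖ ^ 2) η) {x : E} (hb : (∫ y, y ∂η) = x) (a : E) :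
    ∫ y, ‖y - a‖ ^ 2 ∂η = (∫ y, ‖y‖ ^ 2 ∂η) + ‖x - a‖ ^ 2 - ‖x‖ ^ 2 := by
  have hy : Integrable (fun y : E => y) η := by
    refine Integrable.mono' (h2.add (integrable_const 1))
      measurable_id.aestronglyMeasurable (ae_of_all _ fun y => ?_)
    simp only [Pi.add_apply, id_eq]
    nlinarith [norm_nonneg y]
  have hinner : Integrable (fun y : E => (inner ℝ a y : ℝ)) η := (innerSL ℝ a).integrable_comp hy
  have hinner2 : Integrable (fun y : E => 2 * (inner ℝ a y : ℝ)) η := hinner.const_mul 2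
  have hO : Integrable (fun y : E => ‖y‖ ^ 2 - 2 * (inner ℝ a y : ℝ)) η := h2.sub hinner2
  have hsum : ∫ y, ‖y - a‖ ^ 2 ∂η
      = ∫ y, (‖y‖ ^ 2 - 2 * (inner ℝ a y : ℝ) + ‖a‖ ^ 2) ∂η := by
    congr 1; funext y; rw [norm_sub_sq_real, real_inner_comm]
  have hia : ∫ y, (inner ℝ a y : ℝ) ∂η = (inner ℝ a x : ℝ) := by
    rw [← hb]
    exact ((innerSL ℝ a).integral_comp_comm hy)
  rw [hsum, integral_add hO (integrable_const _), integral_sub h2 hinner2,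
    integral_const_mul, hia, integral_const, probReal_univ]
  have hxa : ‖x - a‖ ^ 2 = ‖x‖ ^ 2 - 2 * (inner ℝ a x : ℝ) + ‖a‖ ^ 2 := by
    rw [norm_sub_sq_real, real_inner_comm]
  simp only [ENNReal.toReal_one, one_smul, smul_eq_mul]
  linarith

end Main

lemma main_eq {d : ℕ} (μ ν : Measure (EuclideanSpace ℝ (Fin d)))
    [IsProbabilityMeasure μ] [IsProbabilityMeasure ν]
    (hμ2 : Integrable (fun x => ‖x‖ ^ 2) μ) (hν2 : Integrable (fun y => ‖y‖ ^ 2) ν)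
    (T : EuclideanSpace ℝ (Fin d) → EuclideanSpace ℝ (Fin d)) (hT : Measurable T)
    (π : Measure (EuclideanSpace ℝ (Fin d) × EuclideanSpace ℝ (Fin d)))
    (hπd : π = μ.map (fun x => (x, T x))) (hπ : IsCouplingE d π μ ν)
    (hopt : (∫ p, ‖p.1 - p.2‖ ^ (2 : ℝ) ∂π) = WrE d 2 μ ν)
    (κM : Kernel (EuclideanSpace ℝ (Fin d)) (EuclideanSpace ℝ (Fin d))) [IsMarkovKernel κM]
    (hM : IsCouplingE d (μ.compProd κM) μ ν)
    (hmart : ∀ᵐ x ∂μ, (∫ y, y ∂(κM x)) = x) :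
    AWrE d 2 (μ.compProd κM) π
      = WrE d 2 μ ν + (∫ y, ‖y‖ ^ 2 ∂ν) - ∫ x, ‖x‖ ^ 2 ∂μ := by
  have hMfst : (μ.compProd κM).map Prod.fst = μ := hM.1
  have hπfst : π.map Prod.fst = μ := hπ.1
  have hgm : Measurable fun x : EuclideanSpace ℝ (Fin d) => (x, T x) :=
    measurable_id.prodMk hT
  have hTμ : μ.map T = ν := by
    have h := hπ.2
    rw [hπd, Measure.map_map measurable_snd hgm] at h
    exact h
  have hπdet : π = μ.compProd (Kernel.deterministic T hT) := by
    rw [compProd_det hT]; exact hπd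
  have hνM : Integrable (fun p : EuclideanSpace ℝ (Fin d) × EuclideanSpace ℝ (Fin d) =>
      ‖p.2‖ ^ 2) (μ.compProd κM) := by
    have h := hν2; rw [← hM.2] at h
    exact (integrable_map_measure h.aestronglyMeasurable measurable_snd.aemeasurable).mp h
  have hMint := (Measure.integrable_compProd_iff hνM.aestronglyMeasurable).mp hνM
  have hS2int : Integrable (fun x : EuclideanSpace ℝ (Fin d) => ∫ y, ‖y‖ ^ 2 ∂κM x) μ :=
    hMint.2.congr (ae_of_all _ fun x =>
      integral_congr_ae (ae_of_all _ fun y => Real.norm_of_nonneg (by positivity)))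
  have hkey : ∀ᵐ x ∂μ, ∀ a : EuclideanSpace ℝ (Fin d),
      WrE d 2 (κM x) (Measure.dirac a)
        = (∫ y, ‖y‖ ^ 2 ∂κM x) + ‖x - a‖ ^ 2 - ‖x‖ ^ 2 := by
    filter_upwards [hMint.1, hmart] with x hx1 hx2
    intro a
    rw [WrE_dirac (κM x) a, dirac_cost (κM x) hx1 hx2 a]
  have hTsq : Integrable (fun x : EuclideanSpace ℝ (Fin d) => ‖T x‖ ^ 2) μ := by
    have h := hν2; rw [← hTμ] at h
    exact (integrable_map_measure h.aestronglyMeasurable hT.aemeasurable).mp h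
  have hW : WrE d 2 μ ν = ∫ x, ‖x - T x‖ ^ 2 ∂μ := by
    rw [← hopt, hπd, integral_map
      (f := fun p : EuclideanSpace ℝ (Fin d) × EuclideanSpace ℝ (Fin d) => ‖p.1 - p.2‖ ^ (2:ℝ))
      hgm.aemeasurable (Measurable.aestronglyMeasurable (by fun_prop))]
    simp_rw [rpow_two']
  have hS2ν : ∫ x, (∫ y, ‖y‖ ^ 2 ∂κM x) ∂μ = ∫ y, ‖y‖ ^ 2 ∂ν := by
    have h1 := Measure.integral_compProd hνM
    have h2 : ∫ p : EuclideanSpace ℝ (Fin d) × EuclideanSpace ℝ (Fin d),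
        ‖p.2‖ ^ 2 ∂(μ.compProd κM) = ∫ y, ‖y‖ ^ 2 ∂ν := by
      rw [← hM.2, integral_map (f := fun y : EuclideanSpace ℝ (Fin d) => ‖y‖ ^ 2)
        measurable_snd.aemeasurable (Measurable.aestronglyMeasurable (by fun_prop))]
    exact h1.symm.trans h2
  have hxT : Integrable (fun x : EuclideanSpace ℝ (Fin d) => ‖x - T x‖ ^ 2) μ := by
    refine Integrable.mono' ((hμ2.const_mul 2).add (hTsq.const_mul 2))
      (Measurable.aestronglyMeasurable (by fun_prop)) (ae_of_all _ fun x => ?_)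
    simp only [Pi.add_apply]
    rw [Real.norm_of_nonneg (by positivity)]
    nlinarith [norm_sub_le x (T x), norm_nonneg x, norm_nonneg (T x),
      norm_nonneg (x - T x), sq_nonneg (‖x‖ - ‖T x‖), sq_nonneg (‖x‖ + ‖T x‖)]
  -- membership
  have hdm : Measurable fun x : EuclideanSpace ℝ (Fin d) => (x, x) :=
    measurable_id.prodMk measurable_id
  have hχfst : (μ.map (fun x : EuclideanSpace ℝ (Fin d) => (x, x))).map Prod.fst = μ := by
    have h : Prod.fst ∘ (fun x : EuclideanSpace ℝ (Fin d) => (x, x)) = id := rfl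
    rw [Measure.map_map measurable_fst hdm, h, Measure.map_id]
  have hχsnd : (μ.map (fun x : EuclideanSpace ℝ (Fin d) => (x, x))).map Prod.snd = μ := by
    have h : Prod.snd ∘ (fun x : EuclideanSpace ℝ (Fin d) => (x, x)) = id := rfl
    rw [Measure.map_map measurable_snd hdm, h, Measure.map_id]
  have hmem : (WrE d 2 μ ν + (∫ y, ‖y‖ ^ 2 ∂ν) - ∫ x, ‖x‖ ^ 2 ∂μ)
      ∈ {c | ∃ (χ : Measure (EuclideanSpace ℝ (Fin d) × EuclideanSpace ℝ (Fin d)))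
        (κ κ' : Kernel (EuclideanSpace ℝ (Fin d)) (EuclideanSpace ℝ (Fin d))),
        IsCouplingE d χ ((μ.compProd κM).map Prod.fst) (π.map Prod.fst) ∧
        μ.compProd κM = ((μ.compProd κM).map Prod.fst).compProd κ ∧
        π = (π.map Prod.fst).compProd κ' ∧
        c = ∫ q, (‖q.1 - q.2‖ ^ (2:ℝ) + WrE d 2 (κ q.1) (κ' q.2)) ∂χ} := by
    refine ⟨μ.map (fun x => (x, x)), κM, Kernel.deterministic T hT, ?_, ?_, ?_, ?_⟩
    · rw [hMfst, hπfst]; exact ⟨hχfst, hχsnd⟩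
    · rw [hMfst]
    · rw [hπfst]; exact hπdet
    · have hdiagae : ∀ᵐ q : EuclideanSpace ℝ (Fin d) × EuclideanSpace ℝ (Fin d)
          ∂(μ.map (fun x => (x, x))), q.2 = q.1 := by
        rw [MeasureTheory.ae_map_iff hdm.aemeasurable
          (measurableSet_eq_fun measurable_snd measurable_fst)]
        exact ae_of_all _ fun x => rfl
      have hkeyq : ∀ᵐ q : EuclideanSpace ℝ (Fin d) × EuclideanSpace ℝ (Fin d)
          ∂(μ.map (fun x => (x, x))), ∀ a : EuclideanSpace ℝ (Fin d),
          WrE d 2 (κM q.1) (Measure.dirac a)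
            = (∫ y, ‖y‖ ^ 2 ∂κM q.1) + ‖q.1 - a‖ ^ 2 - ‖q.1‖ ^ 2 := by
        have h := hkey
        rw [← hχfst] at h
        exact ae_of_ae_map measurable_fst.aemeasurable h
      have hcong : (fun q : EuclideanSpace ℝ (Fin d) × EuclideanSpace ℝ (Fin d) =>
            ‖q.1 - q.2‖ ^ (2:ℝ) + WrE d 2 (κM q.1) ((Kernel.deterministic T hT) q.2))
          =ᵐ[μ.map (fun x => (x, x))]
          (fun q => (∫ y, ‖y‖ ^ 2 ∂κM q.1) + ‖q.1 - T q.1‖ ^ 2 - ‖q.1‖ ^ 2) := by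
        filter_upwards [hdiagae, hkeyq] with q h1 h2
        rw [Kernel.deterministic_apply, h2 (T q.2), h1, rpow_two']
        simp
      have hS2c : AEStronglyMeasurable
          (fun q : EuclideanSpace ℝ (Fin d) × EuclideanSpace ℝ (Fin d) =>
            ∫ y, ‖y‖ ^ 2 ∂κM q.1) (μ.map (fun x => (x, x))) := by
        have h := hS2int.aestronglyMeasurable
        rw [← hχfst] at h
        exact h.comp_aemeasurable measurable_fst.aemeasurable
      have hAES : AEStronglyMeasurable
          (fun q : EuclideanSpace ℝ (Fin d) × EuclideanSpace ℝ (Fin d) =>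
            (∫ y, ‖y‖ ^ 2 ∂κM q.1) + ‖q.1 - T q.1‖ ^ 2 - ‖q.1‖ ^ 2)
          (μ.map (fun x => (x, x))) :=
        (hS2c.add (Measurable.aestronglyMeasurable
            (show Measurable fun q : EuclideanSpace ℝ (Fin d) × EuclideanSpace ℝ (Fin d) =>
              ‖q.1 - T q.1‖ ^ 2 by fun_prop))).sub
          (Measurable.aestronglyMeasurable
            (show Measurable fun q : EuclideanSpace ℝ (Fin d) × EuclideanSpace ℝ (Fin d) =>
              ‖q.1‖ ^ 2 by fun_prop))
      rw [integral_congr_ae hcong, integral_map hdm.aemeasurable hAES]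
      simp only
      have hsumA : Integrable (fun x : EuclideanSpace ℝ (Fin d) =>
          (∫ y, ‖y‖ ^ 2 ∂κM x) + ‖x - T x‖ ^ 2) μ := hS2int.add hxT
      rw [integral_sub hsumA hμ2, integral_add hS2int hxT, hS2ν, hW]
      ring
  -- lower bound
  have hlb : ∀ c ∈ {c | ∃ (χ : Measure (EuclideanSpace ℝ (Fin d) × EuclideanSpace ℝ (Fin d)))
        (κ κ' : Kernel (EuclideanSpace ℝ (Fin d)) (EuclideanSpace ℝ (Fin d))),
        IsCouplingE d χ ((μ.compProd κM).map Prod.fst) (π.map Prod.fst) ∧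
        μ.compProd κM = ((μ.compProd κM).map Prod.fst).compProd κ ∧
        π = (π.map Prod.fst).compProd κ' ∧
        c = ∫ q, (‖q.1 - q.2‖ ^ (2:ℝ) + WrE d 2 (κ q.1) (κ' q.2)) ∂χ},
      WrE d 2 μ ν + (∫ y, ‖y‖ ^ 2 ∂ν) - ∫ x, ‖x‖ ^ 2 ∂μ ≤ c := by
    rintro c ⟨χ, κ, κ', hcoup, hMκ, hπκ', rfl⟩
    have hχ1 := hcoup.1
    have hχ2 := hcoup.2
    rw [hMfst] at hχ1 hMκ
    rw [hπfst] at hχ2 hπκ'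
    haveI hsf : IsSFiniteKernel κ := by
      by_contra hcon
      rw [Measure.compProd_of_not_isSFiniteKernel _ _ hcon] at hMκ
      have h0 : ν Set.univ = 0 := by rw [← hM.2, hMκ]; simp
      simp [measure_univ] at h0
    haveI hsf' : IsSFiniteKernel κ' := by
      by_contra hcon
      rw [Measure.compProd_of_not_isSFiniteKernel _ _ hcon] at hπκ'
      have h0 : ν Set.univ = 0 := by rw [← hπ.2, hπκ']; simp
      simp [measure_univ] at h0
    have hκae : ∀ᵐ x ∂μ, κ x = κM x := kernel_ae_eq κ κM hMκ.symm
    have hκ'ae : ∀ᵐ x ∂μ, κ' x = Kernel.deterministic T hT x :=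
      kernel_ae_eq κ' _ (hπκ'.symm.trans hπdet)
    have hae1 : ∀ᵐ q : EuclideanSpace ℝ (Fin d) × EuclideanSpace ℝ (Fin d) ∂χ,
        (κ q.1 = κM q.1) ∧ ∀ a : EuclideanSpace ℝ (Fin d),
          WrE d 2 (κM q.1) (Measure.dirac a)
            = (∫ y, ‖y‖ ^ 2 ∂κM q.1) + ‖q.1 - a‖ ^ 2 - ‖q.1‖ ^ 2 := by
      have h := hκae.and hkey
      rw [← hχ1] at h
      exact ae_of_ae_map measurable_fst.aemeasurable h
    have hae2 : ∀ᵐ q : EuclideanSpace ℝ (Fin d) × EuclideanSpace ℝ (Fin d) ∂χ,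
        κ' q.2 = Measure.dirac (T q.2) := by
      have h := hκ'ae
      rw [← hχ2] at h
      filter_upwards [ae_of_ae_map measurable_snd.aemeasurable h] with q hq
      rw [hq, Kernel.deterministic_apply]
    have hcong : (fun q : EuclideanSpace ℝ (Fin d) × EuclideanSpace ℝ (Fin d) =>
          ‖q.1 - q.2‖ ^ (2:ℝ) + WrE d 2 (κ q.1) (κ' q.2)) =ᵐ[χ]
        (fun q => ‖q.1 - q.2‖ ^ 2
          + ((∫ y, ‖y‖ ^ 2 ∂κM q.1) + ‖q.1 - T q.2‖ ^ 2 - ‖q.1‖ ^ 2)) := by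
      filter_upwards [hae1, hae2] with q h1 h2
      rw [rpow_two', h1.1, h2, h1.2 (T q.2)]
    rw [integral_congr_ae hcong]
    have hμ2' := hμ2; rw [← hχ1] at hμ2'
    have hq1 : Integrable (fun q : EuclideanSpace ℝ (Fin d) × EuclideanSpace ℝ (Fin d) =>
        ‖q.1‖ ^ 2) χ :=
      (integrable_map_measure hμ2'.aestronglyMeasurable measurable_fst.aemeasurable).mp hμ2'
    have hμ2'' := hμ2; rw [← hχ2] at hμ2''
    have hq2 : Integrable (fun q : EuclideanSpace ℝ (Fin d) × EuclideanSpace ℝ (Fin d) =>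
        ‖q.2‖ ^ 2) χ :=
      (integrable_map_measure hμ2''.aestronglyMeasurable measurable_snd.aemeasurable).mp hμ2''
    have hTsq' := hTsq; rw [← hχ2] at hTsq'
    have hqT : Integrable (fun q : EuclideanSpace ℝ (Fin d) × EuclideanSpace ℝ (Fin d) =>
        ‖T q.2‖ ^ 2) χ :=
      (integrable_map_measure hTsq'.aestronglyMeasurable measurable_snd.aemeasurable).mp hTsq'
    have hS2' := hS2int; rw [← hχ1] at hS2'
    have hqS2 : Integrable (fun q : EuclideanSpace ℝ (Fin d) × EuclideanSpace ℝ (Fin d) =>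
        ∫ y, ‖y‖ ^ 2 ∂κM q.1) χ :=
      (integrable_map_measure hS2'.aestronglyMeasurable measurable_fst.aemeasurable).mp hS2'
    have hd12 : Integrable (fun q : EuclideanSpace ℝ (Fin d) × EuclideanSpace ℝ (Fin d) =>
        ‖q.1 - q.2‖ ^ 2) χ := by
      refine Integrable.mono' ((hq1.const_mul 2).add (hq2.const_mul 2))
        (Measurable.aestronglyMeasurable (by fun_prop)) (ae_of_all _ fun q => ?_)
      simp only [Pi.add_apply]
      rw [Real.norm_of_nonneg (by positivity)]
      nlinarith [norm_sub_le q.1 q.2, norm_nonneg q.1, norm_nonneg q.2,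
        norm_nonneg (q.1 - q.2), sq_nonneg (‖q.1‖ - ‖q.2‖), sq_nonneg (‖q.1‖ + ‖q.2‖)]
    have hd1T : Integrable (fun q : EuclideanSpace ℝ (Fin d) × EuclideanSpace ℝ (Fin d) =>
        ‖q.1 - T q.2‖ ^ 2) χ := by
      refine Integrable.mono' ((hq1.const_mul 2).add (hqT.const_mul 2))
        (Measurable.aestronglyMeasurable (by fun_prop)) (ae_of_all _ fun q => ?_)
      simp only [Pi.add_apply]
      rw [Real.norm_of_nonneg (by positivity)]
      nlinarith [norm_sub_le q.1 (T q.2), norm_nonneg q.1, norm_nonneg (T q.2),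
        norm_nonneg (q.1 - T q.2), sq_nonneg (‖q.1‖ - ‖T q.2‖), sq_nonneg (‖q.1‖ + ‖T q.2‖)]
    have hsum1 : Integrable (fun q : EuclideanSpace ℝ (Fin d) × EuclideanSpace ℝ (Fin d) =>
        (∫ y, ‖y‖ ^ 2 ∂κM q.1) + ‖q.1 - T q.2‖ ^ 2) χ := hqS2.add hd1T
    have hsum2 : Integrable (fun q : EuclideanSpace ℝ (Fin d) × EuclideanSpace ℝ (Fin d) =>
        (∫ y, ‖y‖ ^ 2 ∂κM q.1) + ‖q.1 - T q.2‖ ^ 2 - ‖q.1‖ ^ 2) χ := hsum1.sub hq1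
    rw [integral_add hd12 hsum2, integral_sub hsum1 hq1, integral_add hqS2 hd1T]
    have e1 : ∫ q : EuclideanSpace ℝ (Fin d) × EuclideanSpace ℝ (Fin d),
        (∫ y, ‖y‖ ^ 2 ∂κM q.1) ∂χ = ∫ y, ‖y‖ ^ 2 ∂ν := by
      rw [← hS2ν, ← hχ1, integral_map measurable_fst.aemeasurable hS2'.aestronglyMeasurable]
    have e2 : ∫ q : EuclideanSpace ℝ (Fin d) × EuclideanSpace ℝ (Fin d),
        ‖q.1‖ ^ 2 ∂χ = ∫ x, ‖x‖ ^ 2 ∂μ := by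
      rw [← hχ1, integral_map measurable_fst.aemeasurable hμ2'.aestronglyMeasurable]
    have e4 : (0:ℝ) ≤ ∫ q : EuclideanSpace ℝ (Fin d) × EuclideanSpace ℝ (Fin d),
        ‖q.1 - q.2‖ ^ 2 ∂χ := integral_nonneg fun q => by positivity
    have e3 : WrE d 2 μ ν ≤ ∫ q : EuclideanSpace ℝ (Fin d) × EuclideanSpace ℝ (Fin d),
        ‖q.1 - T q.2‖ ^ 2 ∂χ := by
      have hg : Measurable fun q : EuclideanSpace ℝ (Fin d) × EuclideanSpace ℝ (Fin d) =>
          (q.1, T q.2) := measurable_fst.prodMk (hT.comp measurable_snd)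
      have hbdd : ∀ c ∈ {c | ∃ π'', IsCouplingE d π'' μ ν ∧
          c = ∫ p, ‖p.1 - p.2‖ ^ (2:ℝ) ∂π''}, (0:ℝ) ≤ c := by
        rintro c ⟨π'', -, rfl⟩
        exact integral_nonneg fun p => Real.rpow_nonneg (norm_nonneg _) _
      refine csInf_le ⟨0, hbdd⟩ ⟨χ.map (fun q => (q.1, T q.2)), ⟨?_, ?_⟩, ?_⟩
      · have h : Prod.fst ∘ (fun q : EuclideanSpace ℝ (Fin d) × EuclideanSpace ℝ (Fin d) =>
            (q.1, T q.2)) = Prod.fst := rfl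
        rw [Measure.map_map measurable_fst hg, h, hχ1]
      · have h : Prod.snd ∘ (fun q : EuclideanSpace ℝ (Fin d) × EuclideanSpace ℝ (Fin d) =>
            (q.1, T q.2)) = T ∘ Prod.snd := rfl
        rw [Measure.map_map measurable_snd hg, h, ← Measure.map_map hT measurable_snd,
          hχ2, hTμ]
      · rw [integral_map
          (f := fun p : EuclideanSpace ℝ (Fin d) × EuclideanSpace ℝ (Fin d) =>
            ‖p.1 - p.2‖ ^ (2:ℝ)) hg.aemeasurable
          (Measurable.aestronglyMeasurable (by fun_prop))]
        simp_rw [rpow_two']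
    rw [e1, e2]
    linarith
  exact le_antisymm (csInf_le ⟨_, fun c hc => hlb c hc⟩ hmem) (le_csInf ⟨_, hmem⟩ hlb)

/-- Proposition `QuadraticMarReag`: for `μ ≤_cx ν` on `ℝ^d` with finite second
moments and `π ∈ Π(μ,ν)` optimal for `W₂(μ,ν)` and concentrated on the graph of a measurable map
`T`, every martingale coupling `M` between `μ` and `ν` satisfies
`AW₂²(M, π) = W₂²(μ,ν) + ∫ |y|² ν(dy) - ∫ |x|² μ(dx)`; in particular every `M ∈ Π^M(μ,ν)` is an
`AW₂`-minimal martingale rearrangement coupling of `π`. -/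
theorem stmt11 (d : ℕ) (hd : 1 ≤ d)
    (μ ν : Measure (EuclideanSpace ℝ (Fin d)))
    [IsProbabilityMeasure μ] [IsProbabilityMeasure ν]
    (hμ2 : Integrable (fun x => ‖x‖ ^ 2) μ) (hν2 : Integrable (fun y => ‖y‖ ^ 2) ν)
    (hcx : ConvexOrderE d μ ν)
    (T : EuclideanSpace ℝ (Fin d) → EuclideanSpace ℝ (Fin d)) (hT : Measurable T)
    (π : Measure (EuclideanSpace ℝ (Fin d) × EuclideanSpace ℝ (Fin d)))
    (hπd : π = μ.map (fun x => (x, T x))) (hπ : IsCouplingE d π μ ν)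
    (hopt : (∫ p, ‖p.1 - p.2‖ ^ (2 : ℝ) ∂π) = WrE d 2 μ ν)
    (κM : Kernel (EuclideanSpace ℝ (Fin d)) (EuclideanSpace ℝ (Fin d))) [IsMarkovKernel κM]
    (M : Measure (EuclideanSpace ℝ (Fin d) × EuclideanSpace ℝ (Fin d)))
    (hMd : M = μ.compProd κM) (hM : IsCouplingE d M μ ν)
    (hmart : ∀ᵐ x ∂μ, (∫ y, y ∂(κM x)) = x) :
    AWrE d 2 M π = WrE d 2 μ ν + (∫ y, ‖y‖ ^ 2 ∂ν) - ∫ x, ‖x‖ ^ 2 ∂μ ∧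
    (∀ (κ' : Kernel (EuclideanSpace ℝ (Fin d)) (EuclideanSpace ℝ (Fin d))),
      IsMarkovKernel κ' → IsCouplingE d (μ.compProd κ') μ ν →
      (∀ᵐ x ∂μ, (∫ y, y ∂(κ' x)) = x) →
      AWrE d 2 M π ≤ AWrE d 2 (μ.compProd κ') π) := by
  subst hMd
  have h1 := main_eq μ ν hμ2 hν2 T hT π hπd hπ hopt κM hM hmart
  refine ⟨h1, fun κ' hκ'M hκ'c hκ'mart => ?_⟩
  haveI := hκ'M
  rw [h1, main_eq μ ν hμ2 hν2 T hT π hπd hπ hopt κ' hκ'c hκ'mart]
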